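/- For all integers s, t, m ∈ ℤ and n ∈ ℤ_{≥0}, the following identity holds: Σ_{ℓ ≤ s} q_ℓ^{[m]}(x|b) · (e_{t−ℓ}^{[−n−1]}(τ^{−m}b))^⋆ = q_s^{[m−1]}(x|b) · (e_{t−s}^{[−n−1]}(τ^{−m}b))^⋆ + Σ_{ℓ ≤ s−1} q_ℓ^{[m−1]}(x|b) · (e_{t−ℓ}^{[−n]}(τ^{1−m}b))^⋆, where ⋆ is the substitution b_{−i} ↦ −b_{i+1} for all i ≥ 0; all sums are finite since q_ℓ = 0 for ℓ < 0. The identity holds for every number of x-variables. -/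

import Mathlib

open Finset

noncomputable section

variable {R : Type*} [CommRing R]

/-- The formal power series `1/(1 - x·u)`. -/
def geomSeries (x : R) : PowerSeries R := PowerSeries.mk fun m => x ^ m

/-- `e_u^{[k]}(c)`: the power series `∏_{i=1}^k (1 + c_i u)` for `k ≥ 0`, and
`∏_{i=1}^{-k} (1 - c_i u)⁻¹` for `k < 0`.  The sequence `c` is read at indices `1, 2, …`. -/
def eSer (k : ℤ) (c : ℕ → R) : PowerSeries R :=
  if 0 ≤ k then ∏ i ∈ Finset.range k.toNat, (1 + PowerSeries.C (R := R) (c (i + 1)) * PowerSeries.X)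
  else ∏ i ∈ Finset.range (-k).toNat, geomSeries (c (i + 1))

/-- `q_u(x) = ∏_{i=1}^n (1 + x_i u)/(1 - x_i u)`, with `n` x-variables. -/
def qSer (n : ℕ) (x : ℕ → R) : PowerSeries R :=
  ∏ i ∈ Finset.range n,
    ((1 + PowerSeries.C (R := R) (x (i + 1)) * PowerSeries.X) * geomSeries (x (i + 1)))

/-- The coefficient of `u^m` (`m : ℤ`) of a power series; zero when `m < 0`. -/
def coeffZ (m : ℤ) (φ : PowerSeries R) : R :=
  if 0 ≤ m then PowerSeries.coeff (R := R) m.toNat φ else 0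

/-- `q_m^{[ℓ]}(x|c)`: the coefficient of `u^m` in `q_u(x)·e_u^{[ℓ]}(c)`. -/
def qC (m ℓ : ℤ) (n : ℕ) (x c : ℕ → R) : R := coeffZ m (qSer n x * eSer ℓ c)

/-- `q_m^{[k|ℓ]}(x;z|c)`: the coefficient of `u^m` in `q_u(x)·e_u^{[k]}(z)·e_u^{[ℓ]}(c)`. -/
def qC2 (m k ℓ : ℤ) (n : ℕ) (x z c : ℕ → R) : R :=
  coeffZ m (qSer n x * eSer k z * eSer ℓ c)

/-- `e_m^{[k]}(c)`. -/
def eC (m k : ℤ) (c : ℕ → R) : R := coeffZ m (eSer k c)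

/-- `e_m^{[k|ℓ]}(z|c)`: the coefficient of `u^m` in `e_u^{[k]}(z)·e_u^{[ℓ]}(c)`. -/
def eC2 (m k ℓ : ℤ) (z c : ℕ → R) : R := coeffZ m (eSer k z * eSer ℓ c)

/-- Extension of `b` to all integer indices using the convention `b_{-i} = -b_{i+1}` for
`i ≥ 0`; positive indices are untouched.  This also implements the `⋆` substitution. -/
def bext (b : ℤ → R) : ℤ → R := fun j => if 0 < j then b j else -b (1 - j)

/-- `ε(0) = 1` and `ε(m) = 2·(-1)^m` for `m ≥ 1`. -/
def pfEps (m : ℕ) : ℤ := if m = 0 then 1 else 2 * (-1) ^ m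

/-- The subscript `α_i + Σ_{j>i} m_{ij} − Σ_{j<i} m_{ji}` in the Schur–Pfaffian. -/
def pfIdx {r : ℕ} (α : Fin r → ℤ) (m : Fin r → Fin r → ℕ) (i : Fin r) : ℤ :=
  α i + ∑ j, (if i < j then (m i j : ℤ) else 0) - ∑ j, (if j < i then (m j i : ℤ) else 0)

/-- The Schur–Pfaffian `Pf[c^{(1)}_{α_1} ⋯ c^{(r)}_{α_r}]`, as the (finitely supported) sum
over tuples of nonnegative integers `(m_{ij})_{1 ≤ i < j ≤ r}`. -/
def schurPf {r : ℕ} (c : Fin r → ℤ → R) (α : Fin r → ℤ) : R :=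
  ∑ᶠ m ∈ {m : Fin r → Fin r → ℕ | ∀ i j, ¬ i < j → m i j = 0},
    (∏ i, ∏ j, if i < j then (pfEps (m i j) : R) else 1) * ∏ i, c i (pfIdx α m i)

/-- The alphabet of primed, unmarked and circled numbers. -/
inductive MSTEntry where
  | prime : ℕ → MSTEntry
  | unmarked : ℕ → MSTEntry
  | circ : ℕ → MSTEntry
deriving DecidableEq

namespace MSTEntry

/-- Whether an entry is circled (`1`) or not (`0`). -/
def isCirc : MSTEntry → ℕ
  | circ _ => 1
  | _ => 0

/-- Key realizing the order `1' < 1 < 2' < 2 < ⋯` within each class. -/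
def key : MSTEntry → ℕ
  | prime k => 2 * k - 1
  | unmarked k => 2 * k
  | circ k => k

/-- The numeric value of an entry. -/
def val : MSTEntry → ℕ
  | prime k => k
  | unmarked k => k
  | circ k => k

/-- The total order `1' < 1 < 2' < 2 < ⋯ < 1° < 2° < ⋯` on entries of positive value. -/
def le (a b : MSTEntry) : Prop :=
  a.isCirc < b.isCirc ∨ (a.isCirc = b.isCirc ∧ a.key ≤ b.key)

end MSTEntry

/-- The shifted Young diagram of a strict partition `λ` of length `r`:
boxes `(i, j)` with `1 ≤ i ≤ r` and `i ≤ j ≤ λ_i + i - 1` (rows and columns 1-indexed). -/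
def shiftedDiag (r : ℕ) (lam : ℕ → ℕ) : Set (ℕ × ℕ) :=
  {p | 1 ≤ p.1 ∧ p.1 ≤ r ∧ p.1 ≤ p.2 ∧ p.2 ≤ lam p.1 + p.1 - 1}

/-- `T` is a marked shifted tableau of the flagged strict partition `(λ, f)` whose unmarked
and primed entries have numeric value at most `n` (normalized to `unmarked 0` off the
diagram). -/
def IsMST (n r : ℕ) (lam f : ℕ → ℕ) (T : ℕ × ℕ → MSTEntry) : Prop :=
  (∀ p, p ∉ shiftedDiag r lam → T p = .unmarked 0) ∧
  (∀ p ∈ shiftedDiag r lam, 1 ≤ (T p).val) ∧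
  (∀ i j j', (i, j) ∈ shiftedDiag r lam → (i, j') ∈ shiftedDiag r lam → j ≤ j' →
    (T (i, j)).le (T (i, j'))) ∧
  (∀ i i' j, (i, j) ∈ shiftedDiag r lam → (i', j) ∈ shiftedDiag r lam → i ≤ i' →
    (T (i, j)).le (T (i', j))) ∧
  (∀ i i' j k k', (i, j) ∈ shiftedDiag r lam → (i', j) ∈ shiftedDiag r lam → i < i' →
    T (i, j) = .unmarked k → T (i', j) = .unmarked k' → k < k') ∧
  (∀ i j j' k k', (i, j) ∈ shiftedDiag r lam → (i, j') ∈ shiftedDiag r lam → j < j' →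
    T (i, j) = .prime k → T (i, j') = .prime k' → k < k') ∧
  (∀ i j j' k k', (i, j) ∈ shiftedDiag r lam → (i, j') ∈ shiftedDiag r lam → j < j' →
    T (i, j) = .circ k → T (i, j') = .circ k' → k < k') ∧
  (∀ p ∈ shiftedDiag r lam, (T p).le (.circ (f p.1))) ∧
  (∀ p ∈ shiftedDiag r lam, ∀ k, (T p = .unmarked k ∨ T p = .prime k) → k ≤ n)

/-- The factor of the weight `(xz|b)^T` contributed by the entry at box `p`.  The convention
`b_{-i} = -b_{i+1}` is implemented by `bext`. -/
def mstFactor (x z : ℕ → R) (b : ℤ → R) (p : ℕ × ℕ) : MSTEntry → R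
  | .unmarked k => x k + bext b ((p.2 : ℤ) - (p.1 : ℤ))
  | .prime k => x k - bext b ((p.2 : ℤ) - (p.1 : ℤ))
  | .circ k => z k + bext b ((k : ℤ) + (p.1 : ℤ) - (p.2 : ℤ))

/-- The weight `(xz|b)^T` of a marked shifted tableau. -/
def mstWeight (r : ℕ) (lam : ℕ → ℕ) (x z : ℕ → R) (b : ℤ → R) (T : ℕ × ℕ → MSTEntry) : R :=
  ∏ i ∈ Finset.range r, ∏ j ∈ Finset.range (lam (i + 1)),
    mstFactor x z b (i + 1, i + 1 + j) (T (i + 1, i + 1 + j))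

/-- The flagged factorial Q-function `Q_{λ,f}(x;z|b)`, with `n` x-variables. -/
def Qflag (n r : ℕ) (lam f : ℕ → ℕ) (x z : ℕ → R) (b : ℤ → R) : R :=
  ∑ᶠ T ∈ {T : ℕ × ℕ → MSTEntry | IsMST n r lam f T}, mstWeight r lam x z b T

/-- Ivanov's factorial Q-function `Q_λ(x|b)`: the case of the zero flag (no circled
entries, so the z-variables do not occur). -/
def QIvanov (n r : ℕ) (lam : ℕ → ℕ) (x : ℕ → R) (b : ℤ → R) : R :=
  Qflag n r lam (fun _ => 0) x (fun _ => 0) b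

/-- The skew Young diagram `κ/ν`: boxes `(i, j)` with `1 ≤ i ≤ r`, `ν_i < j ≤ κ_i`. -/
def skewDiag (r : ℕ) (kap nu : ℕ → ℕ) : Set (ℕ × ℕ) :=
  {p | 1 ≤ p.1 ∧ p.1 ≤ r ∧ nu p.1 < p.2 ∧ p.2 ≤ kap p.1}

/-- `t` is a row-strict flagged tableau of `(κ/ν, f)` (normalized to `0` off the diagram). -/
def IsRST (r : ℕ) (kap nu f : ℕ → ℕ) (t : ℕ × ℕ → ℕ) : Prop :=
  (∀ p, p ∉ skewDiag r kap nu → t p = 0) ∧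
  (∀ p ∈ skewDiag r kap nu, 1 ≤ t p) ∧
  (∀ i j j', (i, j) ∈ skewDiag r kap nu → (i, j') ∈ skewDiag r kap nu → j < j' →
    t (i, j) < t (i, j')) ∧
  (∀ i i' j, (i, j) ∈ skewDiag r kap nu → (i', j) ∈ skewDiag r kap nu → i ≤ i' →
    t (i, j) ≤ t (i', j)) ∧
  (∀ p ∈ skewDiag r kap nu, t p ≤ f p.1)

/-- The weight `∏_{e ∈ T} (z_{|e|} + b_{|e| + r(e) - c(e)})` of a row-strict flagged tableau. -/
def rstWeight (r : ℕ) (kap nu : ℕ → ℕ) (z : ℕ → R) (b : ℤ → R) (t : ℕ × ℕ → ℕ) : R :=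
  ∏ i ∈ Finset.range r, ∏ j ∈ Finset.range (kap (i + 1) - nu (i + 1)),
    (z (t (i + 1, nu (i + 1) + 1 + j)) +
      b ((t (i + 1, nu (i + 1) + 1 + j) : ℤ) + ((i : ℤ) + 1) - ((nu (i + 1) : ℤ) + 1 + (j : ℤ))))

/-- The row-strict flagged skew factorial Schur polynomial `s̃_{κ/ν,f}(z|b)`. -/
def sTilde (r : ℕ) (kap nu f : ℕ → ℕ) (z : ℕ → R) (b : ℤ → R) : R :=
  ∑ᶠ t ∈ {t : ℕ × ℕ → ℕ | IsRST r kap nu f t}, rstWeight r kap nu z b t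



section Aux

private lemma geom_inv (a : R) :
    (1 - PowerSeries.C (R := R) a * PowerSeries.X) * geomSeries a = 1 := by
  ext n
  cases n with
  | zero => simp [geomSeries]
  | succ k =>
    rw [sub_mul, one_mul, map_sub, mul_assoc, PowerSeries.coeff_C_mul,
      PowerSeries.coeff_succ_X_mul]
    simp [geomSeries, pow_succ, mul_comm]

private lemma coeffZ_one_sub_mul (a : R) (φ : PowerSeries R) (j : ℤ) :
    coeffZ j ((1 - PowerSeries.C (R := R) a * PowerSeries.X) * φ) =
      coeffZ j φ - a * coeffZ (j - 1) φ := by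
  unfold coeffZ
  by_cases hj : 0 ≤ j
  · rw [if_pos hj, if_pos hj]
    by_cases hj1 : 0 ≤ j - 1
    · rw [if_pos hj1]
      obtain ⟨k, rfl⟩ : ∃ k : ℕ, j = (k : ℤ) + 1 := ⟨(j - 1).toNat, by omega⟩
      have h1 : ((k : ℤ) + 1).toNat = k + 1 := by omega
      have h2 : ((k : ℤ) + 1 - 1).toNat = k := by omega
      rw [h1, h2, sub_mul, one_mul, map_sub, mul_assoc, PowerSeries.coeff_C_mul,
        PowerSeries.coeff_succ_X_mul]
    · have : j = 0 := by omega
      subst this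
      rw [if_neg hj1]
      simp
  · rw [if_neg hj, if_neg hj, if_neg (by omega)]
    ring

private lemma eSer_nonpos (m : ℤ) (hm : m ≤ 0) (c : ℕ → R) :
    eSer m c = ∏ i ∈ Finset.range (-m).toNat, geomSeries (c (i + 1)) := by
  rcases eq_or_lt_of_le hm with h | h
  · subst h
    simp [eSer]
  · rw [eSer, if_neg (by omega)]

private lemma eSer_step (m : ℤ) (b : ℤ → R) :
    eSer m (fun i => b (i : ℤ)) =
      eSer (m - 1) (fun i => b (i : ℤ)) *
        (1 - PowerSeries.C (R := R) (bext b (1 - m)) * PowerSeries.X) := by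
  rcases le_or_gt 1 m with hm | hm
  · rw [eSer, if_pos (by omega : (0:ℤ) ≤ m), eSer, if_pos (by omega : (0:ℤ) ≤ m - 1)]
    have ht : m.toNat = (m - 1).toNat + 1 := by omega
    rw [ht, Finset.prod_range_succ]
    have hb : bext b (1 - m) = -(b m) := by
      rw [bext, if_neg (by omega), show (1 : ℤ) - (1 - m) = m from by omega]
    have hc : (((m - 1).toNat + 1 : ℕ) : ℤ) = m := by omega
    rw [hb, hc, map_neg]
    ring
  · have hm0 : m ≤ 0 := by omega
    rw [eSer_nonpos m hm0, eSer_nonpos (m - 1) (by omega)]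
    have ht : (-(m - 1)).toNat = (-m).toNat + 1 := by omega
    rw [ht, Finset.prod_range_succ]
    have hc : (((-m).toNat + 1 : ℕ) : ℤ) = 1 - m := by omega
    have hb : bext b (1 - m) = b (1 - m) := by
      rw [bext, if_pos (by omega)]
    rw [hc, hb, mul_assoc, mul_comm (geomSeries (b (1 - m))), geom_inv, mul_one]

private lemma eSer_neg_split (n : ℕ) (c : ℕ → R) :
    eSer (-(n : ℤ) - 1) c = geomSeries (c 1) * eSer (-(n : ℤ)) (fun i => c (i + 1)) := by
  rw [eSer_nonpos _ (by omega), eSer_nonpos _ (by omega)]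
  have h1 : (-(-(n : ℤ) - 1)).toNat = n + 1 := by omega
  have h2 : (-(-(n : ℤ))).toNat = n := by omega
  rw [h1, h2, Finset.prod_range_succ']
  exact mul_comm _ _

private lemma qC_neg {l : ℤ} (hl : l < 0) (m : ℤ) (n₀ : ℕ) (x c : ℕ → R) :
    qC l m n₀ x c = 0 := by
  rw [qC, coeffZ, if_neg (by omega)]

private lemma qC_step (l m : ℤ) (n₀ : ℕ) (x : ℕ → R) (b : ℤ → R) :
    qC l m n₀ x (fun i => b (i : ℤ)) =
      qC l (m - 1) n₀ x (fun i => b (i : ℤ)) -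
        bext b (1 - m) * qC (l - 1) (m - 1) n₀ x (fun i => b (i : ℤ)) := by
  unfold qC
  rw [eSer_step, show qSer n₀ x * (eSer (m - 1) (fun i => b (i : ℤ)) *
      (1 - PowerSeries.C (R := R) (bext b (1 - m)) * PowerSeries.X)) =
      (1 - PowerSeries.C (R := R) (bext b (1 - m)) * PowerSeries.X) *
        (qSer n₀ x * eSer (m - 1) (fun i => b (i : ℤ))) from by ring,
    coeffZ_one_sub_mul]

private lemma eC_step (j : ℤ) (n : ℕ) (c : ℕ → R) :
    eC j (-(n : ℤ)) (fun i => c (i + 1)) =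
      eC j (-(n : ℤ) - 1) c - c 1 * eC (j - 1) (-(n : ℤ) - 1) c := by
  unfold eC
  have h : eSer (-(n : ℤ)) (fun i => c (i + 1)) =
      (1 - PowerSeries.C (R := R) (c 1) * PowerSeries.X) * eSer (-(n : ℤ) - 1) c := by
    rw [eSer_neg_split, ← mul_assoc, geom_inv, one_mul]
  rw [h, coeffZ_one_sub_mul]

private lemma telescope (F B : ℤ → R) (c : R) (s t : ℤ) (hF : ∀ l < (0 : ℤ), F l = 0) :
    ∑ l ∈ Finset.Icc 0 s, (F l - c * F (l - 1)) * B (t - l) =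
      F s * B (t - s) + ∑ l ∈ Finset.Icc 0 (s - 1), F l * (B (t - l) - c * B (t - l - 1)) := by
  rcases lt_or_ge s 0 with hs | hs
  · rw [Finset.Icc_eq_empty (by omega), Finset.Icc_eq_empty (by omega), hF s hs]
    simp
  · refine Int.leInduction (motive := fun s _ => ∑ l ∈ Finset.Icc 0 s, (F l - c * F (l - 1)) * B (t - l) =
        F s * B (t - s) + ∑ l ∈ Finset.Icc 0 (s - 1), F l * (B (t - l) - c * B (t - l - 1)))
        ?_ ?_ s hs
    · show ∑ l ∈ Finset.Icc (0:ℤ) 0, _ = _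
      rw [show Finset.Icc (0:ℤ) 0 = {0} from rfl, Finset.Icc_eq_empty (by omega : ¬ (0:ℤ) ≤ 0 - 1)]
      simp [hF (-1) (by omega)]
    · intro s hs ih
      show ∑ l ∈ Finset.Icc (0:ℤ) (s+1), _ = _
      have hins : Finset.Icc (0 : ℤ) (s + 1) = insert (s + 1) (Finset.Icc 0 s) := by
        ext y
        simp only [Finset.mem_Icc, Finset.mem_insert]
        omega
      have hins2 : Finset.Icc (0 : ℤ) (s + 1 - 1) = insert s (Finset.Icc 0 (s - 1)) := by
        ext y
        simp only [Finset.mem_Icc, Finset.mem_insert]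
        omega
      rw [hins, Finset.sum_insert (by simp only [Finset.mem_Icc]; omega), hins2,
        Finset.sum_insert (by simp only [Finset.mem_Icc]; omega), ih,
        show s + 1 - 1 = s from by ring, show t - (s + 1) = t - s - 1 from by ring]
      ring

private lemma finsum_le_eq_Icc (g : ℤ → R) (s : ℤ) (hg : ∀ l < (0 : ℤ), g l = 0) :
    ∑ᶠ l ∈ {l : ℤ | l ≤ s}, g l = ∑ l ∈ Finset.Icc 0 s, g l := by
  apply finsum_mem_eq_sum_of_inter_support_eq
  ext l
  simp only [Set.mem_inter_iff, Set.mem_setOf_eq, Function.mem_support, Finset.coe_Icc,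
    Set.mem_Icc]
  constructor
  · rintro ⟨h1, h2⟩
    exact ⟨⟨by by_contra h; exact h2 (hg l (by omega)), h1⟩, h2⟩
  · rintro ⟨⟨_, h1⟩, h2⟩
    exact ⟨h1, h2⟩

end Aux

/-- For all `s, t, m ∈ ℤ` and `n ≥ 0`:
`Σ_{ℓ ≤ s} q_ℓ^{[m]} · (e_{t−ℓ}^{[−n−1]}(τ^{−m}b))^⋆
 = q_s^{[m−1]} · (e_{t−s}^{[−n−1]}(τ^{−m}b))^⋆
   + Σ_{ℓ ≤ s−1} q_ℓ^{[m−1]} · (e_{t−ℓ}^{[−n]}(τ^{1−m}b))^⋆`,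
for every number `n₀` of x-variables. -/
theorem statement_6 (R : Type*) [CommRing R] (n₀ : ℕ) (x : ℕ → R) (b : ℤ → R)
    (s t m : ℤ) (n : ℕ) :
    ∑ᶠ l ∈ {l : ℤ | l ≤ s},
        qC l m n₀ x (fun i => b (i : ℤ)) *
          eC (t - l) (-(n : ℤ) - 1) (fun i => bext b ((i : ℤ) - m)) =
      qC s (m - 1) n₀ x (fun i => b (i : ℤ)) *
          eC (t - s) (-(n : ℤ) - 1) (fun i => bext b ((i : ℤ) - m)) +
        ∑ᶠ l ∈ {l : ℤ | l ≤ s - 1},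
          qC l (m - 1) n₀ x (fun i => b (i : ℤ)) *
            eC (t - l) (-(n : ℤ)) (fun i => bext b ((i : ℤ) + 1 - m)) := by
  set c : ℕ → R := fun i => bext b ((i : ℤ) - m) with hc
  have hc' : (fun i : ℕ => bext b ((i : ℤ) + 1 - m)) = fun i => c (i + 1) := by
    funext i
    show bext b ((i : ℤ) + 1 - m) = bext b (((i + 1 : ℕ) : ℤ) - m)
    congr 1
  have hc1 : c 1 = bext b (1 - m) := by simp [hc]
  set F : ℤ → R := fun l => qC l (m - 1) n₀ x (fun i => b (i : ℤ)) with hF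
  set B : ℤ → R := fun j => eC j (-(n : ℤ) - 1) c with hB
  have hF0 : ∀ l < (0 : ℤ), F l = 0 := fun l hl => qC_neg hl _ _ _ _
  rw [finsum_le_eq_Icc _ s (fun l hl => by rw [qC_neg hl]; ring),
    finsum_le_eq_Icc _ (s - 1) (fun l hl => by rw [qC_neg hl]; ring)]
  calc ∑ l ∈ Finset.Icc 0 s, qC l m n₀ x (fun i => b (i : ℤ)) * eC (t - l) (-(n : ℤ) - 1) c
      = ∑ l ∈ Finset.Icc 0 s, (F l - bext b (1 - m) * F (l - 1)) * B (t - l) := by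
        refine Finset.sum_congr rfl fun l _ => ?_
        rw [qC_step]
    _ = F s * B (t - s) + ∑ l ∈ Finset.Icc 0 (s - 1),
          F l * (B (t - l) - bext b (1 - m) * B (t - l - 1)) :=
        telescope F B (bext b (1 - m)) s t hF0
    _ = _ := by
        congr 1
        refine Finset.sum_congr rfl fun l _ => ?_
        rw [hc', eC_step, hc1, hB]
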